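/- Let {γ^A : A ∈ I} be a basis of Cl(p,q) generated by γ^1,...,γ^n satisfying the Clifford relations, with n = p+q odd. Then F(U) = (1/2^n) ∑_A (γ^A)^{-1} U γ^A = Tr(U)·e + π(U)·e^{1...n}, and F is a projection (F∘F = F) onto the center Cl_0 ⊕ Cl_n of the Clifford algebra. -/

import Mathlib

/-- Ordered product `e^{a_1} ⋯ e^{a_k}` (`a_1 < ⋯ < a_k`) of generators over an
ordered multi-index, encoded as a finset of indices. For `s = ∅` this is `1 = e`. -/
def cliffProd {n : ℕ} {A : Type*} [Ring A] (e : Fin n → A) (s : Finset (Fin n)) : A :=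
  ((s.sort (· ≤ ·)).map e).prod

/-- The entries of the diagonal matrix `η = diag(1,…,1,−1,…,−1)` with `p` entries `+1`
followed by `q = n - p` entries `−1`. -/
def eta (p : ℕ) {n : ℕ} (a b : Fin n) : ℤ :=
  if a = b then (if (a : ℕ) < p then 1 else -1) else 0

/-- The operator `F(U) = 2⁻ⁿ ∑_A (γ^A)⁻¹ U γ^A`. -/
noncomputable def genF (F : Type*) [RCLike F] {n : ℕ} {A : Type*} [Ring A] [Algebra F A]
    (γ : Fin n → A) (U : A) : A :=
  ((2 : F) ^ n)⁻¹ • ∑ s : Finset (Fin n), Ring.inverse (cliffProd γ s) * U * cliffProd γ s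

open scoped symmDiff

section aux

variable {n : ℕ} {A : Type*} [Ring A]

lemma eta_diag_mul_self (p : ℕ) (a : Fin n) : eta p a a * eta p a a = 1 := by
  unfold eta; rw [if_pos rfl]; split_ifs <;> norm_num

lemma sign_sq (k : ℕ) : ((-1:ℤ)^k) * ((-1:ℤ)^k) = 1 := by
  rw [← pow_add]; exact Even.neg_one_pow ⟨k, rfl⟩

lemma smul_flip {s : ℤ} (hs : s * s = 1) {x y : A} (h : x = s • y) : y = s • x := by
  rw [h, smul_smul, hs, one_smul]

lemma cliffProd_empty (c : Fin n → A) : cliffProd c (∅ : Finset (Fin n)) = 1 := by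
  simp [cliffProd]

/-- `P (insert m s) = c m * P s` when `m` is below everything in `s`. -/
lemma cliffProd_insert_min (c : Fin n → A) {m : Fin n} {s : Finset (Fin n)}
    (h1 : ∀ b ∈ s, m ≤ b) (h2 : m ∉ s) :
    cliffProd c (insert m s) = c m * cliffProd c s := by
  unfold cliffProd
  rw [Finset.sort_insert _ h1 h2, List.map_cons, List.prod_cons]

lemma cliffProd_min_cons (c : Fin n → A) {t : Finset (Fin n)} (h : t.Nonempty) :
    cliffProd c t = c (t.min' h) * cliffProd c (t.erase (t.min' h)) := by
  conv_lhs => rw [← Finset.insert_erase (t.min'_mem h)]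
  exact cliffProd_insert_min c (fun b hb => t.min'_le b (Finset.mem_of_mem_erase hb))
    (Finset.notMem_erase _ _)

variable (p : ℕ) (c : Fin n → A)
variable (hrel : ∀ a b : Fin n, c a * c b + c b * c a = ((2 * eta p a b : ℤ) : A))
include hrel

lemma cp_sq (F : Type*) [RCLike F] [Algebra F A] (a : Fin n) :
    c a * c a = ((eta p a a : ℤ) : A) := by
  have h := hrel a a
  have h2 : (2:F) • (c a * c a) = (2:F) • ((eta p a a : ℤ) : A) := by
    rw [two_smul, two_smul, h]; push_cast; rw [two_mul]
  have h3 := congrArg (fun z => ((2:F)⁻¹) • z) h2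
  simpa [smul_smul, inv_mul_cancel₀ (two_ne_zero (α := F))] using h3

lemma cp_anti {a b : Fin n} (hab : a ≠ b) : c a * c b = -(c b * c a) := by
  have h := hrel a b
  rw [eta, if_neg hab] at h
  push_cast at h
  exact eq_neg_of_add_eq_zero_left h

lemma move_left (a : Fin n) : ∀ (l : List (Fin n)), a ∉ l →
    c a * (l.map c).prod = ((-1:ℤ)^l.length) • ((l.map c).prod * c a)
  | [], _ => by simp
  | b :: l, h => by
    have hb : a ≠ b := fun h' => h (h' ▸ List.mem_cons_self)
    have hl : a ∉ l := fun h' => h (List.mem_cons_of_mem _ h')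
    rw [List.map_cons, List.prod_cons, List.length_cons]
    have h1 : c a * (c b * (l.map c).prod) = -(c b * (c a * (l.map c).prod)) := by
      rw [← mul_assoc, cp_anti p c hrel hb, ← mul_assoc, neg_mul]
    rw [h1, move_left a l hl, mul_smul_comm, pow_succ, mul_smul, neg_one_zsmul, smul_neg,
      mul_assoc]

lemma move_right (a : Fin n) (l : List (Fin n)) (h : a ∉ l) :
    (l.map c).prod * c a = ((-1:ℤ)^l.length) • (c a * (l.map c).prod) :=
  smul_flip (sign_sq _) (move_left p c hrel a l h)

lemma move_left_mem (F : Type*) [RCLike F] [Algebra F A] (a : Fin n) :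
    ∀ (l : List (Fin n)), l.Nodup → a ∈ l →
    c a * (l.map c).prod = ((-1:ℤ)^(l.length + 1)) • ((l.map c).prod * c a)
  | [], _, h => by simp at h
  | b :: l, hnd, h => by
    rw [List.map_cons, List.prod_cons, List.length_cons]
    rcases List.nodup_cons.mp hnd with ⟨hbl, hnd'⟩
    by_cases hab : a = b
    · subst hab
      have hal : a ∉ l := hbl
      have h2 : (c a * (l.map c).prod) * c a = ((-1:ℤ)^l.length) • ((c a * c a) * (l.map c).prod) := by
        rw [mul_assoc, move_right p c hrel a l hal, mul_smul_comm, mul_assoc]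
      rw [h2, smul_smul, ← mul_assoc]
      have : ((-1:ℤ)^(l.length + 1 + 1)) * ((-1:ℤ)^l.length) = 1 := by
        rw [← pow_add]
        refine Even.neg_one_pow ⟨l.length + 1, by ring⟩
      rw [this, one_smul]
    · have hal : a ∈ l := (List.mem_cons.mp h).resolve_left hab
      have h1 : c a * (c b * (l.map c).prod) = -(c b * (c a * (l.map c).prod)) := by
        rw [← mul_assoc, cp_anti p c hrel hab, ← mul_assoc, neg_mul]
      rw [h1, move_left_mem F a l hnd' hal, mul_smul_comm, pow_succ, mul_smul, neg_one_zsmul,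
        smul_neg, mul_assoc]
      rw [neg_neg, pow_succ, pow_succ, mul_neg_one, mul_neg_one, neg_neg]

/-- commutation of a single generator with an ordered product, with explicit sign. -/
lemma comm_single (F : Type*) [RCLike F] [Algebra F A] (a : Fin n) (t : Finset (Fin n)) :
    c a * cliffProd c t =
      ((-1:ℤ)^(t.card + if a ∈ t then 1 else 0)) • (cliffProd c t * c a) := by
  unfold cliffProd
  by_cases ha : a ∈ t
  · rw [if_pos ha]
    have := move_left_mem p c hrel F a (t.sort (· ≤ ·)) (Finset.sort_nodup t _)
      ((Finset.mem_sort _).mpr ha)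
    rwa [Finset.length_sort] at this
  · rw [if_neg ha, Nat.add_zero]
    have := move_left p c hrel a (t.sort (· ≤ ·))
      (fun hh => ha ((Finset.mem_sort _).mp hh))
    rwa [Finset.length_sort] at this

/-- Prepending a fresh generator to an ordered product, up to sign. -/
lemma cons_left : ∀ (t : Finset (Fin n)) (x : Fin n), x ∉ t →
    ∃ ζ : ℤ, ζ * ζ = 1 ∧ c x * cliffProd c t = ζ • cliffProd c (insert x t) := by
  intro t
  induction t using Finset.strongInduction with
  | _ t ih =>
    intro x hx
    rcases t.eq_empty_or_nonempty with rfl | ht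
    · refine ⟨1, by norm_num, ?_⟩
      rw [cliffProd_empty, one_smul, mul_one]
      rw [cliffProd_insert_min c (by simp) (by simp), cliffProd_empty, mul_one]
    · set m := t.min' ht with hm
      have hmt : m ∈ t := t.min'_mem ht
      have hxm : x ≠ m := fun h => hx (h ▸ hmt)
      rcases lt_or_gt_of_ne hxm with hlt | hgt
      · refine ⟨1, by norm_num, ?_⟩
        rw [one_smul, cliffProd_insert_min c (fun b hb => le_of_lt (lt_of_lt_of_le hlt (t.min'_le b hb))) hx]
      · -- m < x
        set t' := t.erase m with ht'
        have hsub : t' ⊂ t := Finset.erase_ssubset hmt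
        have hxt' : x ∉ t' := fun h => hx (Finset.mem_of_mem_erase h)
        obtain ⟨ζ, hζ, hcx⟩ := ih t' hsub x hxt'
        refine ⟨-ζ, by rw [neg_mul_neg]; exact hζ, ?_⟩
        have hPt : cliffProd c t = c m * cliffProd c t' := cliffProd_min_cons c ht
        have hstep : c x * cliffProd c t = -(ζ • (c m * cliffProd c (insert x t'))) := by
          rw [hPt, ← mul_assoc, cp_anti p c hrel hxm, neg_mul, mul_assoc, hcx, mul_smul_comm]
        have hins : cliffProd c (insert m (insert x t')) = c m * cliffProd c (insert x t') := by
          refine cliffProd_insert_min c ?_ ?_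
          · intro b hb
            rcases Finset.mem_insert.mp hb with rfl | hb'
            · exact le_of_lt hgt
            · exact t.min'_le b (Finset.mem_of_mem_erase hb')
          · intro hmem
            rcases Finset.mem_insert.mp hmem with h' | h'
            · exact (ne_of_gt hgt) h'.symm
            · exact (Finset.notMem_erase m t) h'
        have hset : insert x t = insert m (insert x t') := by
          rw [Finset.insert_comm, ht', Finset.insert_erase hmt]
        rw [hstep, hset, hins, neg_zsmul]

/-- A product over an arbitrary nodup list equals the ordered product up to sign. -/
lemma list_to_set : ∀ (l : List (Fin n)), l.Nodup →
    ∃ ζ : ℤ, ζ * ζ = 1 ∧ (l.map c).prod = ζ • cliffProd c l.toFinset := by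
  intro l
  induction l with
  | nil => exact fun _ => ⟨1, by norm_num, by simp [cliffProd_empty]⟩
  | cons x l ih =>
    intro hnd
    rcases List.nodup_cons.mp hnd with ⟨hxl, hnd'⟩
    obtain ⟨ζ, hζ, hl⟩ := ih hnd'
    have hxF : x ∉ l.toFinset := fun h => hxl (List.mem_toFinset.mp h)
    obtain ⟨ζ', hζ', hx⟩ := cons_left p c hrel l.toFinset x hxF
    refine ⟨ζ * ζ', by nlinarith [hζ, hζ'], ?_⟩
    rw [List.map_cons, List.prod_cons, hl, mul_smul_comm, hx, List.toFinset_cons,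
      smul_smul]


omit hrel in
lemma symmDiff_singleton_not_mem {t : Finset (Fin n)} {a : Fin n} (ha : a ∉ t) :
    t ∆ ({a} : Finset (Fin n)) = insert a t := by
  ext b
  simp only [Finset.mem_symmDiff, Finset.mem_singleton, Finset.mem_insert]
  constructor
  · rintro (⟨hb, _⟩ | ⟨rfl, _⟩) <;> tauto
  · rintro (rfl | hb)
    · exact Or.inr ⟨rfl, ha⟩
    · exact Or.inl ⟨hb, fun h => ha (h ▸ hb)⟩

omit hrel in
lemma symmDiff_singleton_mem {t : Finset (Fin n)} {a : Fin n} (ha : a ∈ t) :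
    t ∆ ({a} : Finset (Fin n)) = t.erase a := by
  ext b
  simp only [Finset.mem_symmDiff, Finset.mem_singleton, Finset.mem_erase]
  constructor
  · rintro (⟨hb, hba⟩ | ⟨rfl, hb⟩)
    · exact ⟨hba, hb⟩
    · exact absurd ha hb
  · rintro ⟨hba, hb⟩
    exact Or.inl ⟨hb, hba⟩

lemma single_right (F : Type*) [RCLike F] [Algebra F A] (t : Finset (Fin n)) (a : Fin n) :
    ∃ ζ : ℤ, ζ * ζ = 1 ∧ cliffProd c t * c a = ζ • cliffProd c (t ∆ {a}) := by
  classical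
  by_cases ha : a ∈ t
  · obtain ⟨l₁, l₂, hsplit⟩ := List.append_of_mem ((Finset.mem_sort (α := Fin n) (· ≤ ·)).mpr ha)
    have hnd : (t.sort (· ≤ ·)).Nodup := Finset.sort_nodup t _
    rw [hsplit, List.nodup_middle] at hnd
    rcases List.nodup_cons.mp hnd with ⟨hal, hnd12⟩
    have hal2 : a ∉ l₂ := fun h => hal (List.mem_append.mpr (Or.inr h))
    have hal1 : a ∉ l₁ := fun h => hal (List.mem_append.mpr (Or.inl h))
    obtain ⟨ζ, hζ, hls⟩ := list_to_set p c hrel (l₁ ++ l₂) hnd12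
    set e₀ : ℤ := eta p a a with he₀
    refine ⟨(-1:ℤ)^l₂.length * e₀ * ζ, ?_, ?_⟩
    · have h2 := eta_diag_mul_self p a
      have hr : ((-1:ℤ)^l₂.length * e₀ * ζ) * ((-1:ℤ)^l₂.length * e₀ * ζ)
          = (((-1:ℤ)^l₂.length * (-1:ℤ)^l₂.length) * (e₀ * e₀)) * (ζ * ζ) := by ring
      rw [hr, sign_sq, he₀, h2, hζ]; norm_num
    · have hPt : cliffProd c t =
          (l₁.map c).prod * (c a * (l₂.map c).prod) := by
        unfold cliffProd
        rw [hsplit, List.map_append, List.prod_append, List.map_cons, List.prod_cons]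
      have hstep : cliffProd c t * c a
          = ((-1:ℤ)^l₂.length * e₀) • ((l₁.map c).prod * (l₂.map c).prod) := by
        calc cliffProd c t * c a
            = (l₁.map c).prod * (c a * ((l₂.map c).prod * c a)) := by
              rw [hPt, mul_assoc, mul_assoc]
          _ = (l₁.map c).prod * (c a * (((-1:ℤ)^l₂.length) • (c a * (l₂.map c).prod))) := by
              rw [move_right p c hrel a l₂ hal2]
          _ = ((-1:ℤ)^l₂.length) • ((l₁.map c).prod * ((c a * c a) * (l₂.map c).prod)) := by
              rw [mul_smul_comm, mul_smul_comm, ← mul_assoc (c a)]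
          _ = ((-1:ℤ)^l₂.length) • ((l₁.map c).prod * (((e₀ : ℤ) : A) * (l₂.map c).prod)) := by
              rw [cp_sq p c hrel F a, ← he₀]
          _ = ((-1:ℤ)^l₂.length) • ((l₁.map c).prod * (e₀ • (l₂.map c).prod)) := by
              rw [show ((e₀ : ℤ) : A) * (l₂.map c).prod = e₀ • (l₂.map c).prod from
                (zsmul_eq_mul _ _).symm]
          _ = ((-1:ℤ)^l₂.length * e₀) • ((l₁.map c).prod * (l₂.map c).prod) := by
              rw [mul_smul_comm, smul_smul]
      have htf : (l₁ ++ l₂).toFinset = t ∆ {a} := by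
        rw [symmDiff_singleton_mem ha]
        ext b
        have hbt : b ∈ t ↔ b ∈ l₁ ∨ b = a ∨ b ∈ l₂ := by
          rw [← Finset.mem_sort (α := Fin n) (· ≤ ·), hsplit]
          simp [List.mem_append]
        simp only [List.mem_toFinset, List.mem_append, Finset.mem_erase, hbt]
        constructor
        · rintro (hb | hb)
          · exact ⟨fun h => hal1 (h ▸ hb), Or.inl hb⟩
          · exact ⟨fun h => hal2 (h ▸ hb), Or.inr (Or.inr hb)⟩
        · rintro ⟨hba, hb | hb | hb⟩
          · exact Or.inl hb
          · exact absurd hb hba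
          · exact Or.inr hb
      rw [hstep, ← List.prod_append, ← List.map_append, hls, htf, smul_smul]
  · have hnd : (t.sort (· ≤ ·) ++ [a]).Nodup := by
      refine List.Nodup.append (Finset.sort_nodup t _) (List.nodup_singleton a) ?_
      intro b hb hb'
      rw [List.mem_singleton] at hb'
      exact ha (hb' ▸ (Finset.mem_sort (α := Fin n) (· ≤ ·)).mp hb)
    obtain ⟨ζ, hζ, hls⟩ := list_to_set p c hrel _ hnd
    refine ⟨ζ, hζ, ?_⟩
    have h1 : cliffProd c t * c a = ((t.sort (· ≤ ·) ++ [a]).map c).prod := by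
      rw [List.map_append, List.prod_append]
      simp [cliffProd]
    have htf : (t.sort (· ≤ ·) ++ [a]).toFinset = t ∆ {a} := by
      rw [symmDiff_singleton_not_mem ha]
      ext b
      simp only [List.mem_toFinset, List.mem_append, List.mem_singleton,
        Finset.mem_insert, Finset.mem_sort]
      tauto
    rw [h1, hls, htf]

lemma mul_sets (F : Type*) [RCLike F] [Algebra F A] :
    ∀ (t s : Finset (Fin n)),
    ∃ ζ : ℤ, ζ * ζ = 1 ∧ cliffProd c s * cliffProd c t = ζ • cliffProd c (s ∆ t) := by
  intro t
  induction t using Finset.strongInduction with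
  | _ t ih =>
    intro s
    rcases t.eq_empty_or_nonempty with rfl | ht
    · refine ⟨1, by norm_num, ?_⟩
      rw [cliffProd_empty, mul_one, one_smul]
      congr 1
      rw [← Finset.bot_eq_empty, symmDiff_bot]
    · set m := t.min' ht with hm
      have hmt : m ∈ t := t.min'_mem ht
      set t' := t.erase m with ht'
      have hsub : t' ⊂ t := Finset.erase_ssubset hmt
      obtain ⟨ζ₁, h₁, hs1⟩ := single_right p c hrel F s m
      obtain ⟨ζ₂, h₂, hs2⟩ := ih t' hsub (s ∆ {m})
      refine ⟨ζ₁ * ζ₂, by nlinarith [h₁, h₂], ?_⟩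
      have hPt : cliffProd c t = c m * cliffProd c t' := cliffProd_min_cons c ht
      have hset : s ∆ {m} ∆ t' = s ∆ t := by
        rw [symmDiff_assoc]
        congr 1
        rw [symmDiff_comm, symmDiff_singleton_not_mem (Finset.notMem_erase m t),
          Finset.insert_erase hmt]
      rw [hPt, ← mul_assoc, hs1, smul_mul_assoc, hs2, hset, smul_smul]

lemma cliffProd_sq (F : Type*) [RCLike F] [Algebra F A] (s : Finset (Fin n)) :
    ∃ ζ : ℤ, ζ * ζ = 1 ∧ cliffProd c s * cliffProd c s = ζ • 1 := by
  obtain ⟨ζ, hζ, h⟩ := mul_sets p c hrel F s s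
  refine ⟨ζ, hζ, ?_⟩
  rw [h, symmDiff_self, Finset.bot_eq_empty, cliffProd_empty]

lemma comm_disjoint (F : Type*) [RCLike F] [Algebra F A] :
    ∀ (s t : Finset (Fin n)), Disjoint s t →
    cliffProd c s * cliffProd c t
      = ((-1:ℤ)^(s.card * t.card)) • (cliffProd c t * cliffProd c s) := by
  intro s
  induction s using Finset.strongInduction with
  | _ s ih =>
    intro t hdisj
    rcases s.eq_empty_or_nonempty with rfl | hs
    · simp [cliffProd_empty]
    · set m := s.min' hs with hm
      have hms : m ∈ s := s.min'_mem hs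
      set s' := s.erase m with hs'
      have hsub : s' ⊂ s := Finset.erase_ssubset hms
      have hdisj' : Disjoint s' t := Finset.disjoint_of_subset_left (Finset.erase_subset _ _) hdisj
      have hmt : m ∉ t := Finset.disjoint_left.mp hdisj hms
      have hcard : s'.card + 1 = s.card := Finset.card_erase_add_one hms
      have hPs : cliffProd c s = c m * cliffProd c s' := cliffProd_min_cons c hs
      have hcm : c m * cliffProd c t = ((-1:ℤ)^t.card) • (cliffProd c t * c m) := by
        have := comm_single p c hrel F m t
        rwa [if_neg hmt, Nat.add_zero] at this
      calc cliffProd c s * cliffProd c t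
          = c m * (cliffProd c s' * cliffProd c t) := by rw [hPs, mul_assoc]
        _ = c m * (((-1:ℤ)^(s'.card * t.card)) • (cliffProd c t * cliffProd c s')) := by
            rw [ih s' hsub t hdisj']
        _ = ((-1:ℤ)^(s'.card * t.card)) • ((c m * cliffProd c t) * cliffProd c s') := by
            rw [mul_smul_comm, mul_assoc]
        _ = ((-1:ℤ)^(s'.card * t.card) * (-1:ℤ)^t.card) •
              (cliffProd c t * (c m * cliffProd c s')) := by
            rw [hcm, smul_mul_assoc, smul_smul, mul_assoc]
        _ = ((-1:ℤ)^(s.card * t.card)) • (cliffProd c t * cliffProd c s) := by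
            rw [hPs, ← pow_add]
            congr 2
            rw [← hcard]; ring

end aux

/-- Let `{γ^A}` be a basis of `Cl(p,q)` generated by `γ^1,…,γ^n` satisfying the Clifford
relations, with `n = p + q` odd. Then `F(U) = 2⁻ⁿ ∑_A (γ^A)⁻¹ U γ^A = Tr(U)·e + π(U)·e^{1…n}`,
and `F` is a projection onto the center `span{e, e^{1…n}}` of the Clifford algebra. -/
theorem stmt12 {F : Type*} [RCLike F] (p q n : ℕ) (hn : n = p + q) (hodd : Odd n)
    {A : Type*} [Ring A] [Algebra F A]
    (e : Fin n → A)
    (hrele : ∀ a b : Fin n, e a * e b + e b * e a = ((2 * eta p a b : ℤ) : A))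
    (bE : Module.Basis (Finset (Fin n)) F A)
    (hbE : ∀ s, bE s = cliffProd e s)
    (γ : Fin n → A)
    (hγ : ∀ a b : Fin n, γ a * γ b + γ b * γ a = ((2 * eta p a b : ℤ) : A))
    (bΓ : Module.Basis (Finset (Fin n)) F A)
    (hbΓ : ∀ s, bΓ s = cliffProd γ s) :
    (∀ U : A, genF F γ U =
      (bE.repr U ∅) • (1 : A) + (bE.repr U Finset.univ) • cliffProd e Finset.univ) ∧
    (∀ U : A, genF F γ (genF F γ U) = genF F γ U) ∧
    (∀ U : A, genF F γ U ∈
      Submodule.span F ({1, cliffProd e Finset.univ} : Set A)) := by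
  classical
  have hn0 : n ≠ 0 := by rintro rfl; simp [Nat.odd_iff] at hodd
  haveI : NeZero n := ⟨hn0⟩
  have hA : Nontrivial A := nontrivial_of_ne (bE ∅) 0 (bE.ne_zero ∅)
  have hFA : Function.Injective (algebraMap F A) := (algebraMap F A).injective
  haveI : CharZero A := charZero_of_injective_algebraMap hFA
  choose ζ hζ1 hζ2 using cliffProd_sq p γ hγ F
  have hQP : ∀ s, (ζ s • cliffProd γ s) * cliffProd γ s = 1 := by
    intro s; rw [smul_mul_assoc, hζ2 s, smul_smul, hζ1 s, one_smul]
  have hPQ : ∀ s, cliffProd γ s * (ζ s • cliffProd γ s) = 1 := by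
    intro s; rw [mul_smul_comm, hζ2 s, smul_smul, hζ1 s, one_smul]
  have hinv : ∀ s, Ring.inverse (cliffProd γ s) = ζ s • cliffProd γ s := fun s =>
    Ring.inverse_unit ⟨cliffProd γ s, ζ s • cliffProd γ s, hPQ s, hQP s⟩
  have hgen : ∀ U, genF F γ U = ((2:F)^n)⁻¹ • ∑ s : Finset (Fin n),
      (ζ s • cliffProd γ s) * U * cliffProd γ s := by
    intro U; unfold genF; congr 1; exact Finset.sum_congr rfl fun s _ => by rw [hinv s]
  -- Step A : genF commutes with each γ a
  have hcomm1 : ∀ (a : Fin n) (U : A), γ a * genF F γ U = genF F γ U * γ a := by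
    intro a U
    rw [hgen U, mul_smul_comm, smul_mul_assoc]
    congr 1
    rw [Finset.mul_sum, Finset.sum_mul]
    have hinvol : Function.Involutive (fun s : Finset (Fin n) => s ∆ {a}) :=
      fun s => symmDiff_symmDiff_cancel_right {a} s
    rw [← Equiv.sum_comp (hinvol.toPerm _)
      (fun s => (ζ s • cliffProd γ s) * U * cliffProd γ s * γ a)]
    simp only [Function.Involutive.coe_toPerm]
    refine Finset.sum_congr rfl fun s _ => ?_
    have hsq : γ a * γ a = ((eta p a a : ℤ) : A) := cp_sq p γ hγ F a
    have hε : eta p a a * eta p a a = 1 := eta_diag_mul_self p a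
    obtain ⟨ξ, hξ, hξ2⟩ := single_right p γ hγ F s a
    obtain ⟨δ, hδ, hδ2⟩ : ∃ δ : ℤ, δ * δ = 1 ∧
        γ a * cliffProd γ s = δ • (cliffProd γ s * γ a) :=
      ⟨_, sign_sq _, comm_single p γ hγ F a s⟩
    have hcast : ∀ x : A, x * ((eta p a a : ℤ) : A) = (eta p a a) • x := by
      intro x
      rw [← (Int.cast_commute (eta p a a) x).eq, ← zsmul_eq_mul]
    have e1 : ξ • (cliffProd γ (s ∆ {a}) * γ a) = (eta p a a) • cliffProd γ s := by
      rw [← smul_mul_assoc, ← hξ2, mul_assoc, hsq, hcast]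
    have h1 : cliffProd γ (s ∆ {a}) * γ a = (ξ * eta p a a) • cliffProd γ s := by
      have h' := congrArg (fun z => ξ • z) e1
      simp only [smul_smul, hξ, one_smul] at h'
      exact h'
    have hflip : cliffProd γ (s ∆ {a}) = ξ • (cliffProd γ s * γ a) := smul_flip hξ hξ2
    have hkey : ζ (s ∆ {a}) = δ * ζ s * eta p a a := by
      have c1 : cliffProd γ (s ∆ {a}) * cliffProd γ (s ∆ {a})
          = ((δ * ζ s * eta p a a : ℤ)) • (1:A) := by
        calc cliffProd γ (s ∆ {a}) * cliffProd γ (s ∆ {a})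
            = (ξ * ξ) • ((cliffProd γ s * γ a) * (cliffProd γ s * γ a)) := by
              rw [hflip, smul_mul_assoc, mul_smul_comm, smul_smul]
          _ = (cliffProd γ s * (γ a * cliffProd γ s)) * γ a := by
              rw [hξ, one_smul, mul_assoc, mul_assoc, mul_assoc]
          _ = δ • ((cliffProd γ s * cliffProd γ s) * (γ a * γ a)) := by
              rw [hδ2, mul_smul_comm, smul_mul_assoc, mul_assoc, mul_assoc, ← mul_assoc]
          _ = ((δ * ζ s * eta p a a : ℤ)) • (1:A) := by
              rw [hζ2 s, hsq, smul_mul_assoc, one_mul,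
                show ((eta p a a : ℤ) : A) = (eta p a a) • (1:A) by rw [zsmul_eq_mul, mul_one],
                smul_smul, smul_smul]
      have c2 : ((ζ (s ∆ {a}) : ℤ) : A) = ((δ * ζ s * eta p a a : ℤ) : A) := by
        have h'' := (hζ2 (s ∆ {a})).symm.trans c1
        rwa [zsmul_eq_mul, zsmul_eq_mul, mul_one, mul_one] at h''
      exact_mod_cast c2
    have hfin : ζ s * (δ * ξ) = (ξ * eta p a a) * ζ (s ∆ {a}) := by
      rw [hkey]; linear_combination (-(ζ s * ξ * δ)) * hε
    calc γ a * ((ζ s • cliffProd γ s) * U * cliffProd γ s)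
        = ζ s • ((γ a * cliffProd γ s) * U * cliffProd γ s) := by
          rw [smul_mul_assoc, smul_mul_assoc, mul_smul_comm, ← mul_assoc, ← mul_assoc]
      _ = (ζ s * (δ * ξ)) • (cliffProd γ (s ∆ {a}) * U * cliffProd γ s) := by
          rw [hδ2, hξ2, smul_smul, smul_mul_assoc, smul_mul_assoc, smul_smul]
      _ = ((ξ * eta p a a) * ζ (s ∆ {a})) • (cliffProd γ (s ∆ {a}) * U * cliffProd γ s) := by
          rw [hfin]
      _ = (ζ (s ∆ {a}) • cliffProd γ (s ∆ {a})) * U * cliffProd γ (s ∆ {a}) * γ a := by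
          rw [mul_assoc ((ζ (s ∆ {a}) • cliffProd γ (s ∆ {a})) * U), h1, mul_smul_comm,
            smul_mul_assoc, smul_mul_assoc, smul_smul]
  -- genF commutes with everything
  have hcent : ∀ (U V : A), genF F γ U * V = V * genF F γ U := by
    intro U V
    have hPl : ∀ l : List (Fin n),
        genF F γ U * (l.map γ).prod = (l.map γ).prod * genF F γ U := by
      intro l
      induction l with
      | nil => simp
      | cons b l ih =>
        rw [List.map_cons, List.prod_cons, ← mul_assoc, ← hcomm1 b U, mul_assoc, ih,
          ← mul_assoc]
    have hPc : ∀ t, genF F γ U * cliffProd γ t = cliffProd γ t * genF F γ U := fun t =>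
      hPl _
    conv_lhs => rw [← Module.Basis.sum_repr bΓ V]
    conv_rhs => rw [← Module.Basis.sum_repr bΓ V]
    rw [Finset.mul_sum, Finset.sum_mul]
    refine Finset.sum_congr rfl fun t _ => ?_
    rw [mul_smul_comm, smul_mul_assoc, hbΓ t, hPc t]
  -- trace property transfer
  have htrace : ∀ (i₀ : Finset (Fin n)),
      (∀ s t, bE.repr (cliffProd e s * cliffProd e t) i₀
        = bE.repr (cliffProd e t * cliffProd e s) i₀) →
      ∀ X Y : A, bE.repr (X * Y) i₀ = bE.repr (Y * X) i₀ := by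
    intro i₀ hst X Y
    have hYe : ∀ s, bE.repr (cliffProd e s * Y) i₀ = bE.repr (Y * cliffProd e s) i₀ := by
      intro s
      conv_lhs => rw [← Module.Basis.sum_repr bE Y]
      conv_rhs => rw [← Module.Basis.sum_repr bE Y]
      rw [Finset.mul_sum, Finset.sum_mul, map_sum, map_sum, Finset.sum_apply',
        Finset.sum_apply']
      refine Finset.sum_congr rfl fun t _ => ?_
      rw [mul_smul_comm, smul_mul_assoc, map_smul, map_smul, Finsupp.smul_apply,
        Finsupp.smul_apply, hbE t, hst s t]
    conv_lhs => rw [← Module.Basis.sum_repr bE X]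
    conv_rhs => rw [← Module.Basis.sum_repr bE X]
    rw [Finset.sum_mul, Finset.mul_sum, map_sum, map_sum, Finset.sum_apply',
      Finset.sum_apply']
    refine Finset.sum_congr rfl fun s _ => ?_
    rw [smul_mul_assoc, mul_smul_comm, map_smul, map_smul, Finsupp.smul_apply,
      Finsupp.smul_apply, hbE s, hYe s]
  have hrepr_smul_single : ∀ (k : ℤ) (u v : Finset (Fin n)),
      bE.repr (k • cliffProd e u) v = (k : F) * (if u = v then 1 else 0) := by
    intro k u v
    rw [← hbE u, map_zsmul, Finsupp.smul_apply, bE.repr_self, Finsupp.single_apply,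
      zsmul_eq_mul]
  have hkey0 : ∀ s t, bE.repr (cliffProd e s * cliffProd e t) ∅
      = bE.repr (cliffProd e t * cliffProd e s) ∅ := by
    intro s t
    by_cases hst : s = t
    · subst hst; rfl
    · obtain ⟨ζ₁, h₁, e₁⟩ := mul_sets p e hrele F t s
      obtain ⟨ζ₂, h₂, e₂⟩ := mul_sets p e hrele F s t
      rw [e₁, e₂, hrepr_smul_single, hrepr_smul_single, if_neg, if_neg, mul_zero, mul_zero]
      · intro h
        exact hst (symmDiff_eq_bot.mp (Finset.bot_eq_empty ▸ h)).symm
      · intro h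
        exact hst (symmDiff_eq_bot.mp (Finset.bot_eq_empty ▸ h))
  have hkeyU : ∀ s t, bE.repr (cliffProd e s * cliffProd e t) Finset.univ
      = bE.repr (cliffProd e t * cliffProd e s) Finset.univ := by
    intro s t
    by_cases hst : s ∆ t = Finset.univ
    · have hdisj : Disjoint s t := by
        rw [Finset.disjoint_left]
        intro b hbs hbt
        have hb : b ∈ s ∆ t := by rw [hst]; exact Finset.mem_univ b
        rw [Finset.mem_symmDiff] at hb
        tauto
      have hcard : s.card + t.card = n := by
        have h1 : s ∆ t = s ∪ t := hdisj.symmDiff_eq_sup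
        have h2 : (s ∪ t).card = s.card + t.card := Finset.card_union_of_disjoint hdisj
        rw [← h2, ← h1, hst, Finset.card_univ, Fintype.card_fin]
      have heven : Even (s.card * t.card) := by
        rcases Nat.even_or_odd s.card with h | h
        · exact h.mul_right _
        · have ht : Even t.card := by
            have ho : Odd (s.card + t.card) := by rw [hcard]; exact hodd
            exact (Nat.odd_add.mp ho).mp h
          exact ht.mul_left _
      have hcd := comm_disjoint p e hrele F s t hdisj
      rw [heven.neg_one_pow, one_smul] at hcd
      rw [hcd]
    · obtain ⟨ζ₁, h₁, e₁⟩ := mul_sets p e hrele F t s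
      obtain ⟨ζ₂, h₂, e₂⟩ := mul_sets p e hrele F s t
      rw [e₁, e₂, hrepr_smul_single, hrepr_smul_single, if_neg hst, if_neg, mul_zero,
        mul_zero]
      rw [symmDiff_comm]
      exact hst
  -- genF preserves the two central coordinates
  have hTr : ∀ (i₀ : Finset (Fin n)),
      (∀ X Y : A, bE.repr (X * Y) i₀ = bE.repr (Y * X) i₀) →
      ∀ U, bE.repr (genF F γ U) i₀ = bE.repr U i₀ := by
    intro i₀ htr U
    rw [hgen U, map_smul, Finsupp.smul_apply, map_sum, Finset.sum_apply']
    have hterm : ∀ s ∈ (Finset.univ : Finset (Finset (Fin n))),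
        bE.repr ((ζ s • cliffProd γ s) * U * cliffProd γ s) i₀ = bE.repr U i₀ := by
      intro s _
      rw [mul_assoc]
      calc bE.repr ((ζ s • cliffProd γ s) * (U * cliffProd γ s)) i₀
          = bE.repr ((U * cliffProd γ s) * (ζ s • cliffProd γ s)) i₀ := htr _ _
        _ = bE.repr U i₀ := by rw [mul_assoc, hPQ s, mul_one]
    rw [Finset.sum_congr rfl hterm, Finset.sum_const, Finset.card_univ, Fintype.card_finset,
      Fintype.card_fin, nsmul_eq_mul, smul_eq_mul, ← mul_assoc]
    rw [show ((2^n : ℕ) : F) = (2:F)^n by push_cast; ring]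
    rw [inv_mul_cancel₀ (pow_ne_zero n (by norm_num : (2:F) ≠ 0)), one_mul]
  -- central elements have support in {∅, univ}
  have hvan : ∀ (Z : A), (∀ V, Z * V = V * Z) →
      ∀ t, t ≠ ∅ → t ≠ Finset.univ → bE.repr Z t = 0 := by
    intro Z hZ t ht0 htu
    obtain ⟨a, hsign⟩ : ∃ a : Fin n,
        ((-1:ℤ)^(t.card + if a ∈ t then 1 else 0)) = -1 := by
      rcases Nat.even_or_odd t.card with hev | hod
      · obtain ⟨a, ha⟩ := Finset.nonempty_iff_ne_empty.mpr ht0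
        exact ⟨a, by rw [if_pos ha]; exact (hev.add_one).neg_one_pow⟩
      · obtain ⟨a, ha⟩ : ∃ a, a ∉ t := by
          by_contra h; push_neg at h; exact htu (Finset.eq_univ_iff_forall.mpr h)
        exact ⟨a, by rw [if_neg ha, Nat.add_zero]; exact hod.neg_one_pow⟩
    have hZa : e a * Z = Z * e a := (hZ (e a)).symm
    choose ξ hξa hξb using fun u => single_right p e hrele F u a
    have hLform : e a * Z = ∑ u : Finset (Fin n),
        bE.repr Z u • ((((-1:ℤ)^(u.card + if a ∈ u then 1 else 0)) * ξ u) • bE (u ∆ {a})) := by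
      conv_lhs => rw [← Module.Basis.sum_repr bE Z]
      rw [Finset.mul_sum]
      refine Finset.sum_congr rfl fun u _ => ?_
      rw [mul_smul_comm, hbE u, comm_single p e hrele F a u, hξb u, smul_smul, ← hbE]
    have hRform : Z * e a = ∑ u : Finset (Fin n),
        bE.repr Z u • ((ξ u) • bE (u ∆ {a})) := by
      conv_lhs => rw [← Module.Basis.sum_repr bE Z]
      rw [Finset.sum_mul]
      refine Finset.sum_congr rfl fun u _ => ?_
      rw [smul_mul_assoc, hbE u, hξb u, ← hbE]
    have hinj : ∀ u : Finset (Fin n), u ∆ {a} = t ∆ {a} → u = t := by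
      intro u h
      have := congrArg (fun w => w ∆ ({a} : Finset (Fin n))) h
      simpa [symmDiff_symmDiff_cancel_right] using this
    have heval : ∀ (k : Finset (Fin n) → ℤ),
        bE.repr (∑ u : Finset (Fin n), bE.repr Z u • ((k u) • bE (u ∆ {a}))) (t ∆ {a})
          = bE.repr Z t * ((k t : ℤ) : F) := by
      intro k
      rw [map_sum, Finset.sum_apply']
      rw [Finset.sum_eq_single t]
      · rw [map_smul, Finsupp.smul_apply, map_zsmul, Finsupp.smul_apply, bE.repr_self,
          Finsupp.single_apply, if_pos rfl, smul_eq_mul, zsmul_eq_mul, mul_one]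
      · intro u _ hut
        rw [map_smul, Finsupp.smul_apply, map_zsmul, Finsupp.smul_apply, bE.repr_self,
          Finsupp.single_apply, if_neg (fun h => hut (hinj u h)), smul_zero, smul_zero]
      · intro h; exact absurd (Finset.mem_univ t) h
    have hEq : bE.repr Z t * ((((-1:ℤ)^(t.card + if a ∈ t then 1 else 0)) * ξ t : ℤ) : F)
        = bE.repr Z t * ((ξ t : ℤ) : F) := by
      have hL1 : bE.repr (e a * Z) (t ∆ {a})
          = bE.repr Z t * ((((-1:ℤ)^(t.card + if a ∈ t then 1 else 0)) * ξ t : ℤ) : F) := by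
        rw [hLform]; exact heval _
      have hR1 : bE.repr (Z * e a) (t ∆ {a}) = bE.repr Z t * ((ξ t : ℤ) : F) := by
        rw [hRform]; exact heval ξ
      rw [← hL1, ← hR1, hZa]
    rw [hsign] at hEq
    push_cast at hEq
    have hξne : ((ξ t : ℤ) : F) ≠ 0 := by
      rw [Int.cast_ne_zero]
      intro h
      have h' := hξa t
      rw [h, mul_zero] at h'
      exact absurd h' (by norm_num)
    have h2 : bE.repr Z t * ((ξ t : ℤ) : F) = 0 := by
      have := hEq
      have h3 : (2:F) * (bE.repr Z t * ((ξ t : ℤ) : F)) = 0 := by linear_combination -this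
      rcases mul_eq_zero.mp h3 with h | h
      · exact absurd h (by norm_num)
      · exact h
    rcases mul_eq_zero.mp h2 with h | h
    · exact h
    · exact absurd h hξne
  -- main formula
  have hpair : (∅ : Finset (Fin n)) ≠ Finset.univ := by
    intro h
    have h0 : (0 : Fin n) ∈ (∅ : Finset (Fin n)) := h ▸ Finset.mem_univ 0
    simp at h0
  have hmain : ∀ U, genF F γ U
      = bE.repr U ∅ • (1:A) + bE.repr U Finset.univ • cliffProd e Finset.univ := by
    intro U
    have htr0 := hTr ∅ (htrace ∅ hkey0) U
    have htrU := hTr Finset.univ (htrace Finset.univ hkeyU) U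
    have hvan' := hvan (genF F γ U) (hcent U)
    have hdecomp : genF F γ U
        = ∑ u : Finset (Fin n), bE.repr (genF F γ U) u • bE u := (Module.Basis.sum_repr bE _).symm
    rw [hdecomp, ← Finset.sum_subset
      (Finset.subset_univ ({∅, Finset.univ} : Finset (Finset (Fin n))))
      (fun u _ hu => by
        simp only [Finset.mem_insert, Finset.mem_singleton] at hu
        push_neg at hu
        rw [hvan' u hu.1.ne_empty hu.2, zero_smul])]
    rw [Finset.sum_pair hpair, hbE, hbE, cliffProd_empty, htr0, htrU]
  refine ⟨hmain, ?_, ?_⟩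
  · intro U
    have h0 : bE.repr (genF F γ U) ∅ = bE.repr U ∅ := hTr ∅ (htrace ∅ hkey0) U
    have hU : bE.repr (genF F γ U) Finset.univ = bE.repr U Finset.univ :=
      hTr Finset.univ (htrace Finset.univ hkeyU) U
    rw [hmain (genF F γ U), h0, hU, ← hmain U]
  · intro U
    rw [hmain U]
    exact Submodule.add_mem _
      (Submodule.smul_mem _ _ (Submodule.subset_span (by simp)))
      (Submodule.smul_mem _ _ (Submodule.subset_span (by simp)))
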